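/- Let ℓ = ℓ1 ℓ2 be a factorization of a Lyndon word ℓ with ℓ1 and ℓ2 both Lyndon, and suppose ℓ2 is not equal to the longest proper Lyndon suffix ℓ^r of ℓ. Then, writing the costandard factorization ℓ1 = u v (so u = ℓ1^l and v = ℓ1^r), the word u ℓ2 is Lyndon, and both rearrangements u ℓ2 v and v u ℓ2 are lexicographically greater than ℓ. -/

import Mathlib

/- Words over a linearly ordered alphabet `I` are lists, compared by the
lexicographic order of Lean's `LinearOrder (List I)` instance, in which a word
is smaller than any word of which it is a proper prefix. -/

variable {I : Type*} [LinearOrder I]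

/-- A nonempty word is *Lyndon* if it is lexicographically smaller than
every proper nonempty suffix of itself. -/
def IsLyndon (w : List I) : Prop :=
  w ≠ [] ∧ ∀ i, 0 < i → i < w.length → w < w.drop i

/-- `r` is the longest proper suffix of `l` that is Lyndon
(the right factor `l^r` of the costandard factorization). -/
def LongestLyndonSuffix (l r : List I) : Prop :=
  r <:+ l ∧ r.length < l.length ∧ IsLyndon r ∧
    ∀ r', r' <:+ l → r'.length < l.length → IsLyndon r' → r'.length ≤ r.length

/-- `p` is the longest proper prefix of `l` that is Lyndon
(the left factor `l^{ls}` of the standard factorization). -/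
def LongestLyndonPrefix (l p : List I) : Prop :=
  p <+: l ∧ p.length < l.length ∧ IsLyndon p ∧
    ∀ p', p' <+: l → p'.length < l.length → IsLyndon p' → p'.length ≤ p.length

/-- `fs` is the canonical factorization of `w`: a nonempty, lexicographically
nonincreasing list of Lyndon words whose concatenation is `w`. -/
def IsCanonicalFactorization (w : List I) (fs : List (List I)) : Prop :=
  w = fs.flatten ∧ fs ≠ [] ∧ (∀ f ∈ fs, IsLyndon f) ∧ fs.Chain' (· ≥ ·)
/-- Common-prefix cancellation for the lexicographic order. -/
lemma RotateAux.append_lt_append_left_iff (a : List I) {x y : List I} :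
    a ++ x < a ++ y ↔ x < y := by
  induction a with
  | nil => simp
  | cons h t ih =>
    rw [List.cons_append, List.cons_append]
    exact List.cons_lt_cons_self.trans ih

lemma RotateAux.nil_lt_of_ne {y : List I} (h : y ≠ []) : ([] : List I) < y := by
  cases y with
  | nil => exact absurd rfl h
  | cons a l => exact List.nil_lt_cons a l

lemma RotateAux.le_self_append (x t : List I) : x ≤ x ++ t := by
  rcases eq_or_ne t [] with rfl | ht
  · simp
  · have : x ++ [] < x ++ t := (RotateAux.append_lt_append_left_iff x).2
      (RotateAux.nil_lt_of_ne ht)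
    rw [List.append_nil] at this
    exact this.le

lemma RotateAux.prefix_le {x y : List I} (h : x <+: y) : x ≤ y := by
  obtain ⟨t, rfl⟩ := h
  exact RotateAux.le_self_append x t

lemma RotateAux.lex_append_aux {x y : List I} (h : List.Lex (· < ·) x y) :
    ∀ s t : List I, ¬ x <+: y → List.Lex (· < ·) (x ++ s) (y ++ t) := by
  induction h with
  | nil => exact fun s t hp => absurd List.nil_prefix hp
  | rel hab => exact fun s t _ => List.Lex.rel hab
  | cons h ih =>
    exact fun s t hp =>
      List.Lex.cons (ih s t fun hpre => hp (List.cons_prefix_cons.mpr ⟨rfl, hpre⟩))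

/-- If `x < y` and `x` is not a prefix of `y`, then the first strict difference is
inside `x`, so appending anything preserves the inequality. -/
lemma RotateAux.append_lt_append {x y : List I} (h : x < y) (hp : ¬ x <+: y) (s t : List I) :
    x ++ s < y ++ t :=
  RotateAux.lex_append_aux h s t hp

lemma RotateAux.append_lt_append_of_length_le {x y : List I} (h : x < y)
    (hl : y.length ≤ x.length) (s t : List I) : x ++ s < y ++ t := by
  refine RotateAux.append_lt_append h (fun hp => ?_) s t
  exact absurd (hp.eq_of_length_le hl) h.ne

/-- A suffix is the drop of the length difference. -/
lemma RotateAux.suffix_drop_eq {s w : List I} (h : s <:+ w) :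
    w.drop (w.length - s.length) = s := by
  obtain ⟨t, rfl⟩ := h
  rw [List.length_append, Nat.add_sub_cancel]
  exact List.drop_left

lemma RotateAux.suffix_of_suffix_of_length_le {s1 s2 w : List I} (h1 : s1 <:+ w)
    (h2 : s2 <:+ w) (hl : s1.length ≤ s2.length) : s1 <:+ s2 := by
  have e1 := RotateAux.suffix_drop_eq h1
  have e2 := RotateAux.suffix_drop_eq h2
  have hw1 := h1.length_le
  have hw2 := h2.length_le
  have h3 : (w.length - s2.length) + (s2.length - s1.length) = w.length - s1.length := by
    omega
  have : s2.drop (s2.length - s1.length) = s1 := by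
    calc s2.drop (s2.length - s1.length)
        = (w.drop (w.length - s2.length)).drop (s2.length - s1.length) := by rw [e2]
      _ = w.drop ((w.length - s2.length) + (s2.length - s1.length)) :=
          List.drop_drop
      _ = w.drop (w.length - s1.length) := by rw [h3]
      _ = s1 := e1
  exact this ▸ List.drop_suffix _ _

lemma IsLyndon.lt_of_suffix {w s : List I} (hw : IsLyndon w) (hs : s <:+ w) (hne : s ≠ [])
    (hp : s.length < w.length) : w < s := by
  have hslen : 0 < s.length := List.length_pos_iff.mpr hne
  have := hw.2 (w.length - s.length) (by omega) (by omega)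
  rwa [RotateAux.suffix_drop_eq hs] at this

/-- The longest proper Lyndon suffix is the lexicographically smallest proper
nonempty suffix. -/
lemma LongestLyndonSuffix.min {w v : List I} (h : LongestLyndonSuffix w v) :
    ∀ s, s <:+ w → s ≠ [] → s.length < w.length → v ≤ s := by
  obtain ⟨hsuf, hlen, hLv, hmax⟩ := h
  have hvpos : 0 < v.length := List.length_pos_iff.mpr hLv.1
  obtain ⟨i, hi, hmin⟩ := Finset.exists_min_image (Finset.Ioo 0 w.length)
    (fun i => w.drop i) ⟨w.length - v.length, by rw [Finset.mem_Ioo]; omega⟩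
  rw [Finset.mem_Ioo] at hi
  have hmlen : (w.drop i).length = w.length - i := List.length_drop
  have hmne : w.drop i ≠ [] := by
    intro hnil
    have := congrArg List.length hnil
    rw [hmlen] at this
    simp at this
    omega
  have hmL : IsLyndon (w.drop i) := by
    refine ⟨hmne, fun j hj hjlen => ?_⟩
    rw [hmlen] at hjlen
    have hdj : (w.drop i).drop j = w.drop (i + j) := List.drop_drop
    have hmem : i + j ∈ Finset.Ioo 0 w.length := by rw [Finset.mem_Ioo]; omega
    have hle : w.drop i ≤ w.drop (i + j) := hmin _ hmem
    rw [← hdj] at hle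
    refine lt_of_le_of_ne hle (fun he => ?_)
    have := congrArg List.length he
    rw [hdj, hmlen, List.length_drop] at this
    omega
  have hmsuf : w.drop i <:+ w := List.drop_suffix i w
  have hmlev : (w.drop i).length ≤ v.length := hmax _ hmsuf (by omega) hmL
  have hmv : w.drop i = v := by
    by_cases hlt : (w.drop i).length < v.length
    · exfalso
      have hmsufv : w.drop i <:+ v :=
        RotateAux.suffix_of_suffix_of_length_le hmsuf hsuf (le_of_lt hlt)
      have h1 : v < w.drop i := hLv.lt_of_suffix hmsufv hmne hlt
      have h2 : w.drop i ≤ v := by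
        have hmem : w.length - v.length ∈ Finset.Ioo 0 w.length := by
          rw [Finset.mem_Ioo]; omega
        have := hmin _ hmem
        rwa [RotateAux.suffix_drop_eq hsuf] at this
      exact absurd (lt_of_le_of_lt h2 h1) (lt_irrefl _)
    · have heq : (w.drop i).length = v.length := by omega
      exact (RotateAux.suffix_of_suffix_of_length_le hmsuf hsuf (le_of_eq heq)).eq_of_length heq
  intro s hssuf hsne hslen
  have hspos : 0 < s.length := List.length_pos_iff.mpr hsne
  have hmem : w.length - s.length ∈ Finset.Ioo 0 w.length := by rw [Finset.mem_Ioo]; omega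
  have := hmin _ hmem
  rw [RotateAux.suffix_drop_eq hssuf] at this
  rw [← hmv]
  exact this

/-- In the costandard factorization the left factor is Lyndon. -/
lemma RotateAux.left_factor_lyndon {ℓ1 u v : List I} (h1 : IsLyndon ℓ1)
    (hv : LongestLyndonSuffix ℓ1 v) (hsplit : ℓ1 = u ++ v) : IsLyndon u := by
  have hvne := hv.2.2.1.1
  have hvlen := hv.2.1
  have hulen : u.length + v.length = ℓ1.length := by
    rw [hsplit, List.length_append]
  have hune : u ≠ [] := by
    intro h
    rw [h] at hulen
    simp at hulen
    omega
  refine ⟨hune, fun i hi hilen => ?_⟩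
  have hssuf : u.drop i <:+ u := List.drop_suffix i u
  have hslen : (u.drop i).length = u.length - i := List.length_drop
  have hsne : u.drop i ≠ [] := by
    intro h
    have := congrArg List.length h
    rw [hslen] at this
    simp at this
    omega
  have hsvsuf : u.drop i ++ v <:+ ℓ1 := by
    obtain ⟨t, ht⟩ := hssuf
    exact ⟨t, by rw [hsplit, ← List.append_assoc, ht]⟩
  have hsvlen : (u.drop i ++ v).length < ℓ1.length := by
    rw [List.length_append, hslen]
    omega
  have hltsv : ℓ1 < u.drop i ++ v :=
    h1.lt_of_suffix hsvsuf (by simp [hsne]) hsvlen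
  by_contra hcon
  push_neg at hcon
  by_cases hp : u.drop i <+: u
  · obtain ⟨u', hu'⟩ := hp
    have hu'len : (u.drop i).length + u'.length = u.length := by
      have := congrArg List.length hu'
      rwa [List.length_append] at this
    have hu'ne : u' ≠ [] := by
      intro h
      rw [h] at hu'len
      simp at hu'len
      omega
    have hu'suf : u' ++ v <:+ ℓ1 :=
      ⟨u.drop i, by rw [hsplit, ← List.append_assoc, hu']⟩
    have hu'lenlt : (u' ++ v).length < ℓ1.length := by
      rw [List.length_append]
      have : 0 < (u.drop i).length := List.length_pos_iff.mpr hsne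
      omega
    have hminv : v ≤ u' ++ v := hv.min _ hu'suf (by simp [hu'ne]) hu'lenlt
    have hlt2 : u.drop i ++ (u' ++ v) < u.drop i ++ v := by
      rw [← List.append_assoc, hu', ← hsplit]
      exact hltsv
    have : u' ++ v < v := (RotateAux.append_lt_append_left_iff _).1 hlt2
    exact absurd (lt_of_le_of_lt hminv this) (lt_irrefl _)
  · have hslt : u.drop i < u := lt_of_le_of_ne hcon (by
      intro h
      have := congrArg List.length h
      rw [hslen] at this
      omega)
    have : u.drop i ++ v < u ++ v := RotateAux.append_lt_append hslt hp v v
    rw [← hsplit] at this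
    exact absurd (hltsv.trans this) (lt_irrefl _)

/-- Concatenation of Lyndon words `a < b` is Lyndon. -/
lemma RotateAux.append_lt_right {a b : List I} (ha : IsLyndon a) (hb : IsLyndon b)
    (hab : a < b) : a ++ b < b := by
  by_cases hp : a <+: b
  · obtain ⟨c, rfl⟩ := hp
    have hcne : c ≠ [] := by
      rintro rfl
      rw [List.append_nil] at hab
      exact absurd hab (lt_irrefl a)
    rw [RotateAux.append_lt_append_left_iff a]
    refine hb.lt_of_suffix (List.suffix_append a c) hcne ?_
    rw [List.length_append]
    have := List.length_pos_iff.mpr ha.1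
    omega
  · have := RotateAux.append_lt_append hab hp b []
    rwa [List.append_nil] at this

lemma RotateAux.lyndon_append {a b : List I} (ha : IsLyndon a) (hb : IsLyndon b)
    (hab : a < b) : IsLyndon (a ++ b) := by
  have habne : a ++ b ≠ [] := by simp [ha.1]
  refine ⟨habne, fun i hi hilen => ?_⟩
  rw [List.length_append] at hilen
  rcases lt_trichotomy i a.length with hcase | hcase | hcase
  · rw [List.drop_append_of_le_length (le_of_lt hcase)]
    have hlt : a < a.drop i := ha.2 i hi hcase
    exact RotateAux.append_lt_append_of_length_le hlt (by rw [List.length_drop]; omega) b b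
  · rw [List.drop_append, hcase, List.drop_length, Nat.sub_self,
      List.drop_zero, List.nil_append]
    exact RotateAux.append_lt_right ha hb hab
  · rw [List.drop_append, List.drop_eq_nil_of_le (le_of_lt hcase),
      List.nil_append]
    have hsub : 0 < i - a.length := by omega
    have hlt : b < b.drop (i - a.length) := hb.2 _ hsub (by omega)
    exact (RotateAux.append_lt_right ha hb hab).trans hlt

open RotateAux in
/-- If `ℓ = ℓ1 ℓ2` with `ℓ, ℓ1, ℓ2` Lyndon and `ℓ2 ≠ ℓ^r`, then, writing the costandard
factorization `ℓ1 = u v`, the word `u ℓ2` is Lyndon and both rearrangements `u ℓ2 v`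
and `v u ℓ2` are lexicographically greater than `ℓ`. -/
theorem rotate_gt (ℓ ℓ1 ℓ2 r : List I)
    (hℓ : IsLyndon ℓ) (h1 : IsLyndon ℓ1) (h2 : IsLyndon ℓ2) (hsplit : ℓ = ℓ1 ++ ℓ2)
    (hr : LongestLyndonSuffix ℓ r) (hne : ℓ2 ≠ r) :
    ∀ u v : List I, ℓ1 = u ++ v → LongestLyndonSuffix ℓ1 v →
      IsLyndon (u ++ ℓ2) ∧ ℓ < u ++ ℓ2 ++ v ∧ ℓ < v ++ u ++ ℓ2 := by
  intro u v huv hv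
  have hℓ1ne := h1.1
  have hℓ2ne := h2.1
  have hvne := hv.2.2.1.1
  have hℓ1pos : 0 < ℓ1.length := List.length_pos_iff.mpr hℓ1ne
  have hℓ2pos : 0 < ℓ2.length := List.length_pos_iff.mpr hℓ2ne
  have hvpos : 0 < v.length := List.length_pos_iff.mpr hvne
  have hlensplit : ℓ.length = ℓ1.length + ℓ2.length := by rw [hsplit, List.length_append]
  have hlenuv : ℓ1.length = u.length + v.length := by rw [huv, List.length_append]
  have hvlen := hv.2.1
  have hupos : 0 < u.length := by omega
  have hl2suf : ℓ2 <:+ ℓ := ⟨ℓ1, hsplit.symm⟩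
  have hl2len : ℓ2.length < ℓ.length := by omega
  have hrlen := hr.2.1
  have hl2r : ℓ2.length < r.length := by
    have hle : ℓ2.length ≤ r.length := hr.2.2.2 ℓ2 hl2suf hl2len h2
    rcases lt_or_eq_of_le hle with h | h
    · exact h
    · exact absurd ((suffix_of_suffix_of_length_le hl2suf hr.1 (le_of_eq h)).eq_of_length h)
        hne
  have hu_le : u ≤ ℓ := by
    refine prefix_le ⟨v ++ ℓ2, ?_⟩
    rw [hsplit, huv, List.append_assoc]
  have hℓ_lt_ℓ2 : ℓ < ℓ2 := hℓ.lt_of_suffix hl2suf hℓ2ne hl2len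
  have hu_lt : u < ℓ2 := lt_of_le_of_lt hu_le hℓ_lt_ℓ2
  have hu_lyn : IsLyndon u := left_factor_lyndon h1 hv huv
  have hconc : IsLyndon (u ++ ℓ2) := lyndon_append hu_lyn h2 hu_lt
  -- key inequality: v ++ ℓ2 < ℓ2 ++ v
  have key : v ++ ℓ2 < ℓ2 ++ v := by
    by_cases hD : v ++ ℓ2 < ℓ2
    · have h' := append_lt_append_of_length_le hD
        (by rw [List.length_append]; omega) [] v
      rwa [List.append_nil] at h'
    · exfalso
      have hDlt : ℓ2 < v ++ ℓ2 := by
        rcases lt_or_eq_of_le (not_lt.mp hD) with h | h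
        · exact h
        · exfalso
          have := congrArg List.length h
          rw [List.length_append] at this
          omega
      have hl2sufr : ℓ2 <:+ r :=
        suffix_of_suffix_of_length_le hl2suf hr.1 (le_of_lt hl2r)
      obtain ⟨s, hs⟩ := hl2sufr
      have hssuf : s <:+ ℓ1 := by
        obtain ⟨p, hp⟩ := hr.1
        rw [← hs, ← List.append_assoc] at hp
        rw [hsplit] at hp
        exact ⟨p, List.append_cancel_right hp⟩
      have hslen : s.length + ℓ2.length = r.length := by
        rw [← hs, List.length_append]
      have hsne : s ≠ [] := by
        intro h; rw [h] at hslen; simp at hslen; omega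
      have hsproper : s.length < ℓ1.length := by omega
      have hrlt : s ++ ℓ2 < ℓ2 := by
        have hle : r ≤ ℓ2 := hr.min ℓ2 hl2suf hℓ2ne hl2len
        rw [← hs] at hle
        refine lt_of_le_of_ne hle (fun h => ?_)
        rw [hs] at h
        exact hne h.symm
      have main : ∀ n (t : List I), t.length ≤ n → t ≠ [] → t <:+ ℓ1 →
          t.length < ℓ1.length → t ++ ℓ2 < ℓ2 → False := by
        intro n
        induction n with
        | zero =>
          intro t htlen htne _ _ _
          exact htne (List.length_eq_zero_iff.mp (by omega))
        | succ n ih =>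
          intro t htlen htne htsuf htproper hlt
          have hvt : v ≤ t := hv.min t htsuf htne htproper
          rcases eq_or_lt_of_le hvt with heq | hvlt
          · rw [← heq] at hlt
            exact absurd (hlt.trans hDlt) (lt_irrefl _)
          · by_cases hp : v <+: t
            · obtain ⟨t1, rfl⟩ := hp
              have ht1ne : t1 ≠ [] := by
                rintro rfl
                rw [List.append_nil] at hvlt
                exact absurd hvlt (lt_irrefl v)
              have ht1lt : t1 ++ ℓ2 < ℓ2 := by
                have h1' : v ++ (t1 ++ ℓ2) < v ++ ℓ2 := by
                  rw [← List.append_assoc]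
                  exact hlt.trans hDlt
                exact (append_lt_append_left_iff v).1 h1'
              have ht1suf : t1 <:+ ℓ1 := (List.suffix_append v t1).trans htsuf
              have ht1len : t1.length < ℓ1.length := by
                rw [List.length_append] at htproper
                omega
              refine ih t1 ?_ ht1ne ht1suf ht1len ht1lt
              rw [List.length_append] at htlen
              omega
            · have hvl2 : v ++ ℓ2 < t ++ ℓ2 := append_lt_append hvlt hp ℓ2 ℓ2
              exact absurd ((hvl2.trans hlt).trans hDlt) (lt_irrefl _)
      exact main s.length s le_rfl hsne hssuf hsproper hrlt
  refine ⟨hconc, ?_, ?_⟩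
  · rw [hsplit, huv, List.append_assoc, List.append_assoc]
    exact (append_lt_append_left_iff u).2 key
  · have hℓ1v : ℓ1 < v := h1.lt_of_suffix hv.1 hvne hvlen
    have h' := append_lt_append_of_length_le hℓ1v (by omega) ℓ2 (u ++ ℓ2)
    rw [← hsplit] at h'
    rwa [List.append_assoc]
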